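/- (Existence of a saddle point of the restricted two-camp game.) Suppose W_{ij} ≥ 0 for all i, j, and for all i: 0 ≤ w⁰_i ≤ 1, θ_i ≥ 0, and z⁰_i ∈ [−1, 1]. Fix nodes α, β, γ, δ and budgets k_g, k_b > 0, and define g(k₁, l₁) = F(k₁ e_α, (k_g − k₁) e_β, l₁ e_γ, (k_b − l₁) e_δ). Then there exists a saddle point (k₁*, l₁*) ∈ [0, k_g] × [0, k_b], i.e., a point such that g(k₁, l₁*) ≤ g(k₁*, l₁*) ≤ g(k₁*, l₁) for all k₁ ∈ [0, k_g] and all l₁ ∈ [0, k_b]. -/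

import Mathlib

open scoped Matrix

section AuxLemmas

/-- Entries of `(1 - W)⁻¹` are nonnegative when `W` is entrywise nonnegative with
row sums of absolute values less than one. -/
lemma entry_inv_one_sub_nonneg {n : ℕ} (W : Matrix (Fin n) (Fin n) ℝ)
    (hW : ∀ i, ∑ j, |W i j| < 1) (hWnn : ∀ i j, 0 ≤ W i j) (i j : Fin n) :
    0 ≤ (1 - W)⁻¹ i j := by
  letI : NormedRing (Matrix (Fin n) (Fin n) ℝ) := Matrix.linftyOpNormedRing
  letI : NormedAlgebra ℝ (Matrix (Fin n) (Fin n) ℝ) := Matrix.linftyOpNormedAlgebra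
  have hpow : ∀ (m : ℕ) (a c : Fin n), 0 ≤ (W ^ m) a c := by
    intro m
    induction m with
    | zero => intro a c; simp [Matrix.one_apply]; positivity
    | succ m ih =>
      intro a c
      rw [pow_succ, Matrix.mul_apply]
      exact Finset.sum_nonneg fun k _ => mul_nonneg (ih a k) (hWnn k c)
  have hnorm : ‖W‖ < 1 := by
    rw [Matrix.linfty_opNorm_def]
    have : (Finset.univ.sup fun i : Fin n => ∑ j, ‖W i j‖₊) < 1 := by
      rw [Finset.sup_lt_iff (by norm_num : (⊥ : NNReal) < 1)]
      intro a _
      rw [← NNReal.coe_lt_coe]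
      push_cast
      simpa [Real.norm_eq_abs] using hW a
    exact_mod_cast this
  have hsum : HasSum (fun m : ℕ => W ^ m) (Ring.inverse (1 - W)) :=
    hasSum_geom_series_inverse W hnorm
  have hev : ∀ M : Matrix (Fin n) (Fin n) ℝ, ‖M i j‖ ≤ 1 * ‖M‖ := by
    intro M
    rw [one_mul]
    have h1 : ‖M i j‖₊ ≤ ∑ j', ‖M i j'‖₊ :=
      Finset.single_le_sum (f := fun j' => ‖M i j'‖₊) (fun _ _ => zero_le) (Finset.mem_univ j)
    have h2 : (∑ j', ‖M i j'‖₊) ≤ Finset.univ.sup fun a : Fin n => ∑ j', ‖M a j'‖₊ :=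
      Finset.le_sup (f := fun a : Fin n => ∑ j', ‖M a j'‖₊) (Finset.mem_univ i)
    have := h1.trans h2
    rw [Matrix.linfty_opNorm_def]
    exact_mod_cast this
  let L : Matrix (Fin n) (Fin n) ℝ →L[ℝ] ℝ :=
    LinearMap.mkContinuous
      { toFun := fun M => M i j, map_add' := fun _ _ => rfl, map_smul' := fun _ _ => rfl }
      1 hev
  have hentry : HasSum (fun m : ℕ => (W ^ m) i j) (L (Ring.inverse (1 - W))) :=
    L.hasSum hsum
  have : 0 ≤ L (Ring.inverse (1 - W)) := hentry.nonneg fun m => hpow m i j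
  rwa [Matrix.nonsing_inv_eq_ringInverse]

/-- The clamped vertex maximizes a concave quadratic `-(a*x^2) + bc*x` on `[lo,hi]`. -/
lemma quad_argmax {a bc lo hi : ℝ} (ha : 0 < a) (hlh : lo ≤ hi) :
    ∀ x ∈ Set.Icc lo hi,
      -(a*x^2) + bc*x ≤ -(a*(max lo (min hi (bc/(2*a))))^2) + bc*(max lo (min hi (bc/(2*a)))) := by
  intro x hx
  obtain ⟨hx1, hx2⟩ := hx
  set v := bc/(2*a) with hv
  set k := max lo (min hi v) with hkdef
  have hbc : bc = 2*a*v := by rw [hv]; field_simp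
  have key : (k - v)^2 ≤ (x - v)^2 := by
    rcases le_total v lo with h1 | h1
    · have hk : k = lo := by
        rw [hkdef, min_eq_right (h1.trans hlh), max_eq_left h1]
      rw [hk]; nlinarith
    · rcases le_total v hi with h2 | h2
      · have hk : k = v := by rw [hkdef, min_eq_right h2, max_eq_right h1]
        rw [hk]; simpa using sq_nonneg (x - v)
      · have hk : k = hi := by rw [hkdef, min_eq_left h2, max_eq_right hlh]
        rw [hk]; nlinarith
  have expand : -(a*x^2) + bc*x - (-(a*k^2) + bc*k) = a*(k-v)^2 - a*(x-v)^2 := by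
    rw [hbc]; ring
  linarith [mul_le_mul_of_nonneg_left key ha.le, expand]

lemma clamp_mem {lo hi : ℝ} (h : lo ≤ hi) (v : ℝ) : max lo (min hi v) ∈ Set.Icc lo hi :=
  ⟨le_max_left _ _, max_le h (min_le_left _ _)⟩

lemma exists_fixed_pt {a : ℝ} (ha : 0 < a) (f : ℝ → ℝ) (hf : Continuous f)
    (hmem : ∀ x ∈ Set.Icc 0 a, f x ∈ Set.Icc (0:ℝ) a) :
    ∃ x ∈ Set.Icc (0:ℝ) a, f x = x := by
  have h0 : (0:ℝ) ≤ a := ha.le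
  have hc : ContinuousOn (fun x => f x - x) (Set.Icc 0 a) :=
    (hf.sub continuous_id).continuousOn
  have hsub : Set.Icc (f a - a) (f 0 - 0) ⊆ (fun x => f x - x) '' Set.Icc 0 a :=
    intermediate_value_Icc' h0 hc
  have h0mem : (0:ℝ) ∈ Set.Icc (f a - a) (f 0 - 0) := by
    constructor
    · have := (hmem a ⟨h0, le_refl a⟩).2; linarith
    · have := (hmem 0 ⟨le_refl 0, h0⟩).1; linarith
  obtain ⟨x, hx, hfx⟩ := hsub h0mem
  exact ⟨x, hx, sub_eq_zero.mp hfx⟩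

/-- Saddle point of a concave-convex quadratic on a rectangle. -/
lemma saddle_quadratic (A B C a1 a2 kg kb : ℝ) (hA : A ≤ 0) (hB : 0 ≤ B)
    (hkg : 0 < kg) (hkb : 0 < kb) :
    ∃ k ∈ Set.Icc (0:ℝ) kg, ∃ l ∈ Set.Icc (0:ℝ) kb,
      (∀ x ∈ Set.Icc (0:ℝ) kg, A*x^2 + a1*x + C*x*l ≤ A*k^2 + a1*k + C*k*l) ∧
      (∀ y ∈ Set.Icc (0:ℝ) kb, B*l^2 + a2*l + C*k*l ≤ B*y^2 + a2*y + C*k*y) := by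
  set e : ℕ → ℝ := fun m => 1/(m+1) with he_def
  have he_pos : ∀ m, 0 < e m := fun m => by positivity
  set φ : ℕ → ℝ → ℝ := fun m l => max 0 (min kg ((a1 + C*l)/(2*(e m - A)))) with hφ_def
  set ψ : ℕ → ℝ → ℝ := fun m k => max 0 (min kb ((-(a2 + C*k))/(2*(B + e m)))) with hψ_def
  have hden1 : ∀ m, 0 < e m - A := fun m => by have := he_pos m; linarith
  have hden2 : ∀ m, 0 < B + e m := fun m => by have := he_pos m; linarith
  have hfix : ∀ m : ℕ, ∃ l ∈ Set.Icc (0:ℝ) kb, ψ m (φ m l) = l := by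
    intro m
    apply exists_fixed_pt hkb
    · apply Continuous.max continuous_const
      apply Continuous.min continuous_const
      apply Continuous.div_const
      apply Continuous.neg
      exact continuous_const.add <| continuous_const.mul <|
        (continuous_const.max <| continuous_const.min <|
          (continuous_const.add (continuous_const.mul continuous_id)).div_const _)
    · intro x _; exact clamp_mem hkb.le _
  choose l₀ hl₀mem hl₀fix using hfix
  set kseq : ℕ → ℝ := fun m => φ m (l₀ m) with hkseq
  have hkmem : ∀ m, kseq m ∈ Set.Icc (0:ℝ) kg := fun m => clamp_mem hkg.le _
  have hP1 : ∀ m, ∀ x ∈ Set.Icc (0:ℝ) kg,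
      (A - e m)*x^2 + (a1 + C*(l₀ m))*x ≤ (A - e m)*(kseq m)^2 + (a1 + C*(l₀ m))*(kseq m) := by
    intro m x hx
    have := quad_argmax (a := e m - A) (bc := a1 + C*(l₀ m)) (hden1 m) hkg.le x hx
    have h2 : kseq m = max 0 (min kg ((a1 + C*(l₀ m))/(2*(e m - A)))) := rfl
    rw [← h2] at this
    nlinarith [this]
  have hP2 : ∀ m, ∀ y ∈ Set.Icc (0:ℝ) kb,
      -((B + e m)*y^2) - (a2 + C*(kseq m))*y ≤
        -((B + e m)*(l₀ m)^2) - (a2 + C*(kseq m))*(l₀ m) := by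
    intro m y hy
    have := quad_argmax (a := B + e m) (bc := -(a2 + C*(kseq m))) (hden2 m) hkb.le y hy
    have h2 : l₀ m = max 0 (min kb ((-(a2 + C*(kseq m)))/(2*(B + e m)))) := (hl₀fix m).symm
    rw [← h2] at this
    nlinarith [this]
  have hcomp : IsCompact (Set.Icc (0:ℝ) kg ×ˢ Set.Icc (0:ℝ) kb) :=
    (isCompact_Icc).prod isCompact_Icc
  obtain ⟨⟨k, l⟩, hklmem, σ, hσ, hconv⟩ :=
    hcomp.tendsto_subseq (x := fun m => (kseq m, l₀ m)) (fun m => ⟨hkmem m, hl₀mem m⟩)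
  have hk : Filter.Tendsto (fun m => kseq (σ m)) Filter.atTop (nhds k) :=
    (continuous_fst.tendsto _).comp hconv
  have hl : Filter.Tendsto (fun m => l₀ (σ m)) Filter.atTop (nhds l) :=
    (continuous_snd.tendsto _).comp hconv
  have he0 : Filter.Tendsto (fun m => e (σ m)) Filter.atTop (nhds 0) := by
    have h1 : Filter.Tendsto e Filter.atTop (nhds 0) := by
      simpa [he_def] using tendsto_one_div_add_atTop_nhds_zero_nat (𝕜 := ℝ)
    exact h1.comp hσ.tendsto_atTop
  refine ⟨k, hklmem.1, l, hklmem.2, ?_, ?_⟩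
  · intro x hx
    have hlim1 : Filter.Tendsto
        (fun m => (A - e (σ m))*x^2 + (a1 + C*(l₀ (σ m)))*x) Filter.atTop
        (nhds ((A - 0)*x^2 + (a1 + C*l)*x)) :=
      ((tendsto_const_nhds.sub he0).mul tendsto_const_nhds).add
        ((tendsto_const_nhds.add (tendsto_const_nhds.mul hl)).mul tendsto_const_nhds)
    have hlim2 : Filter.Tendsto
        (fun m => (A - e (σ m))*(kseq (σ m))^2 + (a1 + C*(l₀ (σ m)))*(kseq (σ m))) Filter.atTop
        (nhds ((A - 0)*k^2 + (a1 + C*l)*k)) :=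
      ((tendsto_const_nhds.sub he0).mul (hk.pow 2)).add
        ((tendsto_const_nhds.add (tendsto_const_nhds.mul hl)).mul hk)
    have := le_of_tendsto_of_tendsto' hlim1 hlim2 (fun m => hP1 (σ m) x hx)
    nlinarith [this]
  · intro y hy
    have hlim1 : Filter.Tendsto
        (fun m => -((B + e (σ m))*y^2) - (a2 + C*(kseq (σ m)))*y) Filter.atTop
        (nhds (-((B + 0)*y^2) - (a2 + C*k)*y)) :=
      (((tendsto_const_nhds.add he0).mul tendsto_const_nhds).neg).sub
        ((tendsto_const_nhds.add (tendsto_const_nhds.mul hk)).mul tendsto_const_nhds)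
    have hlim2 : Filter.Tendsto
        (fun m => -((B + e (σ m))*(l₀ (σ m))^2) - (a2 + C*(kseq (σ m)))*(l₀ (σ m))) Filter.atTop
        (nhds (-((B + 0)*l^2) - (a2 + C*k)*l)) :=
      (((tendsto_const_nhds.add he0).mul (hl.pow 2)).neg).sub
        ((tendsto_const_nhds.add (tendsto_const_nhds.mul hk)).mul hl)
    have := le_of_tendsto_of_tendsto' hlim1 hlim2 (fun m => hP2 (σ m) y hy)
    nlinarith [this]

end AuxLemmas

/-- The two-phase objective function `F(x¹,x²,y¹,y²)` (the sum of final opinions). -/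
noncomputable def twoPhaseF (n : ℕ) (θ c r s : Fin n → ℝ)
    (b : Matrix (Fin n) (Fin n) ℝ) (x1 x2 y1 y2 : Fin n → ℝ) : ℝ :=
  (∑ i, ∑ j, c i * b j i)
  + (∑ j, x2 j * (θ j / 2) * ((∑ i, c i * b j i) + r j))
  + (∑ j, y2 j * (θ j / 2) * ((∑ i, c i * b j i) - r j))
  + (∑ i, x1 i * (θ i / 2) * (1 + c i) *
      (s i + ∑ j, (x2 j + y2 j) * (θ j / 2) * b j i))
  - (∑ i, y1 i * (θ i / 2) * (1 - c i) *
      (s i + ∑ j, (x2 j + y2 j) * (θ j / 2) * b j i))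

/-- under the paper's sign assumptions, the restricted two-camp game
`g(k₁,l₁)` has a saddle point on `[0,k_g] × [0,k_b]`. -/
theorem saddle_point_two_camp_game (n : ℕ) (hn : 0 < n)
    (W : Matrix (Fin n) (Fin n) ℝ)
    (hW : ∀ i, ∑ j, |W i j| < 1)
    (hWnonneg : ∀ i j, 0 ≤ W i j)
    (w0 θ z0 : Fin n → ℝ)
    (hw0 : ∀ i, 0 ≤ w0 i ∧ w0 i ≤ 1)
    (hθ : ∀ i, 0 ≤ θ i)
    (hz0 : ∀ i, -1 ≤ z0 i ∧ z0 i ≤ 1)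
    (Δ : Matrix (Fin n) (Fin n) ℝ) (hΔ : Δ = (1 - W)⁻¹)
    (r : Fin n → ℝ) (hr : ∀ i, r i = ∑ j, Δ j i)
    (c : Fin n → ℝ) (hc : ∀ i, c i = w0 i * z0 i)
    (b : Matrix (Fin n) (Fin n) ℝ) (hb : ∀ j i, b j i = r j * w0 j * Δ j i)
    (s : Fin n → ℝ) (hs : ∀ i, s i = ∑ j, b j i)
    (α β γ δ : Fin n) (kg kb : ℝ) (hkg : 0 < kg) (hkb : 0 < kb)
    (g : ℝ → ℝ → ℝ)
    (hg : ∀ k₁ l₁ : ℝ, g k₁ l₁ =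
      twoPhaseF n θ c r s b
        (fun i => if i = α then k₁ else 0)
        (fun i => if i = β then kg - k₁ else 0)
        (fun i => if i = γ then l₁ else 0)
        (fun i => if i = δ then kb - l₁ else 0)) :
    ∃ k₁star ∈ Set.Icc (0 : ℝ) kg, ∃ l₁star ∈ Set.Icc (0 : ℝ) kb,
      (∀ k₁ ∈ Set.Icc (0 : ℝ) kg, g k₁ l₁star ≤ g k₁star l₁star) ∧
      (∀ l₁ ∈ Set.Icc (0 : ℝ) kb, g k₁star l₁star ≤ g k₁star l₁) := by
  -- nonnegativity facts
  have hΔnn : ∀ i j, 0 ≤ Δ i j := by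
    intro i j; rw [hΔ]; exact entry_inv_one_sub_nonneg W hW hWnonneg i j
  have hrnn : ∀ j, 0 ≤ r j := by
    intro j; rw [hr]; exact Finset.sum_nonneg fun x _ => hΔnn x j
  have hbnn : ∀ j i, 0 ≤ b j i := by
    intro j i; rw [hb]
    exact mul_nonneg (mul_nonneg (hrnn j) (hw0 j).1) (hΔnn j i)
  have hcb : ∀ i, -1 ≤ c i ∧ c i ≤ 1 := by
    intro i; rw [hc]
    obtain ⟨h1, h2⟩ := hw0 i
    obtain ⟨h3, h4⟩ := hz0 i
    constructor <;> nlinarith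
  -- collapsed form of g
  have hq : ∀ k l : ℝ, g k l =
      (∑ i, ∑ j, c i * b j i)
      + (kg - k) * (θ β / 2) * ((∑ i, c i * b β i) + r β)
      + (kb - l) * (θ δ / 2) * ((∑ i, c i * b δ i) - r δ)
      + k * (θ α / 2) * (1 + c α) *
          (s α + (kg - k) * (θ β / 2) * b β α + (kb - l) * (θ δ / 2) * b δ α)
      - l * (θ γ / 2) * (1 - c γ) *
          (s γ + (kg - k) * (θ β / 2) * b β γ + (kb - l) * (θ δ / 2) * b δ γ) := by
    intro k l
    rw [hg]
    simp only [twoPhaseF, add_mul, ite_mul, zero_mul, Finset.sum_add_distrib,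
      Finset.sum_ite_eq', Finset.mem_univ, if_true]
    ring
  -- quadratic coefficients
  set P : ℝ := (θ α / 2) * (1 + c α) with hP_def
  set Q : ℝ := (θ γ / 2) * (1 - c γ) with hQ_def
  have hPnn : 0 ≤ P := by
    have := (hcb α).1; have := hθ α
    apply mul_nonneg (by positivity) (by linarith)
  have hQnn : 0 ≤ Q := by
    have := (hcb γ).2; have := hθ γ
    apply mul_nonneg (by positivity) (by linarith)
  set A : ℝ := -(P * ((θ β / 2) * b β α)) with hA_def
  set B : ℝ := Q * ((θ δ / 2) * b δ γ) with hB_def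
  set C : ℝ := Q * ((θ β / 2) * b β γ) - P * ((θ δ / 2) * b δ α) with hC_def
  set a1 : ℝ := P * (s α + (θ β / 2) * b β α * kg + (θ δ / 2) * b δ α * kb)
      - (θ β / 2) * ((∑ i, c i * b β i) + r β) with ha1_def
  set a2 : ℝ := -(Q * (s γ + (θ β / 2) * b β γ * kg + (θ δ / 2) * b δ γ * kb))
      - (θ δ / 2) * ((∑ i, c i * b δ i) - r δ) with ha2_def
  set a0 : ℝ := (∑ i, ∑ j, c i * b j i)
      + kg * (θ β / 2) * ((∑ i, c i * b β i) + r β)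
      + kb * (θ δ / 2) * ((∑ i, c i * b δ i) - r δ) with ha0_def
  have hq2 : ∀ k l : ℝ, g k l = a0 + a1*k + a2*l + A*k^2 + B*l^2 + C*(k*l) := by
    intro k l
    rw [hq k l, ha0_def, ha1_def, ha2_def, hA_def, hB_def, hC_def, hP_def, hQ_def]
    ring
  have hAle : A ≤ 0 := by
    rw [hA_def]
    have : 0 ≤ P * ((θ β / 2) * b β α) :=
      mul_nonneg hPnn (mul_nonneg (by have := hθ β; positivity) (hbnn β α))
    linarith
  have hBge : 0 ≤ B := by
    rw [hB_def]
    exact mul_nonneg hQnn (mul_nonneg (by have := hθ δ; positivity) (hbnn δ γ))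
  clear_value P Q A B C a1 a2 a0
  obtain ⟨ks, hks, ls, hls, H1, H2⟩ := saddle_quadratic A B C a1 a2 kg kb hAle hBge hkg hkb
  refine ⟨ks, hks, ls, hls, ?_, ?_⟩
  · intro k hk
    rw [hq2 k ls, hq2 ks ls]
    have := H1 k hk
    linarith [this]
  · intro l hl
    rw [hq2 ks ls, hq2 ks l]
    have := H2 l hl
    linarith [this]
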